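/- In the two-stage game where stage 1 is the 2x2 game with row/column strategies {A, B} and payoffs u1(A,A)=(0,0), u1(A,B)=(0,0), u1(B,A)=(1,3), u1(B,B)=(4,2), and stage 2 has payoffs u2(A,A)=(1,1), u2(A,B)=(1,1), u2(B,A)=(1,3), u2(B,B)=(1,3), with δ = 1, the following profile is a credible equilibrium: Row plays B in stage 1, plays B in stage 2 if (B,B) occurred in stage 1 and A otherwise; Column plays B in both stages after every history. In particular, this credible equilibrium supports the outcome (B,B) in stage 1, which is not a Nash equilibrium of the stage-1 game. -/
import Mathlib


/-!  A formal model of multi-stage games (Ismail, "Credible equilibrium").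

A multi-stage game `G = (G^1, …, G^T)` is modeled by stage strategy spaces
`A t i` (possibly mixed strategies) for each stage `t` and player `i`, stage
payoff functions `u i t`, and a discount factor `δ`; a finite horizon `T` is
the special case where stage payoffs vanish from stage `T` on.  A subgame is
identified by a stage `k` together with a history (a path, of which only the
first `k` entries matter); two subgames are equivalent iff they start at the
same stage.  -/

namespace MSG

variable {ι : Type}

/-- A path of play: an action profile at every stage. -/
abbrev PlayPath (A : ℕ → ι → Type) := ∀ t, ∀ i, A t i

/-- A strategy of player `i`: an action at every stage `t` as a function of the
history, depending only on play before stage `t`. -/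
structure PStrat (A : ℕ → ι → Type) (i : ι) where
  act : ∀ t, PlayPath A → A t i
  adapted : ∀ t (p q : PlayPath A), (∀ s, s < t → p s = q s) → act t p = act t q

/-- A strategy profile. -/
abbrev Profile (A : ℕ → ι → Type) := ∀ i, PStrat A i

/-- The play induced by profile `σ` in the subgame starting at stage `k` after
history `h`, computed up to stage `n`. -/
noncomputable def outcomeUpTo (A : ℕ → ι → Type) (σ : Profile A) (k : ℕ) (h : PlayPath A) :
    ℕ → PlayPath A
  | 0 => h
  | t + 1 =>
    Function.update (outcomeUpTo A σ k h t) t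
      (if t < k then h t else fun i => (σ i).act t (outcomeUpTo A σ k h t))

/-- The path of play induced by `σ` from the subgame `(k, h)`. -/
noncomputable def outcome (A : ℕ → ι → Type) (σ : Profile A) (k : ℕ) (h : PlayPath A) :
    PlayPath A :=
  fun t => outcomeUpTo A σ k h (t + 1) t

/-- Player `i`'s discounted payoff in the subgame starting at stage `k` after
history `h` under profile `σ`. -/
noncomputable def subPayoff (A : ℕ → ι → Type) (u : ι → ∀ t, (∀ i, A t i) → ℝ) (δ : ℝ)
    (σ : Profile A) (k : ℕ) (h : PlayPath A) (i : ι) : ℝ :=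
  ∑' t : ℕ, δ ^ t * u i (k + t) (outcome A σ k h (k + t))

/-- `σ` restricted to the subgame `(k, h)` is a Nash equilibrium. -/
def NashFrom [DecidableEq ι] (A : ℕ → ι → Type) (u : ι → ∀ t, (∀ i, A t i) → ℝ) (δ : ℝ)
    (σ : Profile A) (k : ℕ) (h : PlayPath A) : Prop :=
  ∀ i (τ : PStrat A i),
    subPayoff A u δ (Function.update σ i τ) k h i ≤ subPayoff A u δ σ k h i

/-- Subgame perfect equilibrium: Nash in every subgame. -/
def SPE [DecidableEq ι] (A : ℕ → ι → Type) (u : ι → ∀ t, (∀ i, A t i) → ℝ) (δ : ℝ)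
    (σ : Profile A) : Prop :=
  ∀ k h, NashFrom A u δ σ k h

/-- Replace the first `k` stages of `p` by the history `h`. -/
def splice (A : ℕ → ι → Type) (k : ℕ) (h p : PlayPath A) : PlayPath A :=
  fun s => if s < k then h s else p s

/-- Player `i`'s strategy `σi` has the same restriction to the equivalent
subgames `(k, h)` and `(k, h')`. -/
def SameRestriction (A : ℕ → ι → Type) {i : ι} (σi : PStrat A i) (k : ℕ)
    (h h' : PlayPath A) : Prop :=
  ∀ t, k ≤ t → ∀ p : PlayPath A, σi.act t (splice A k h p) = σi.act t (splice A k h' p)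

/-- Credible equilibrium: an SPE such that whenever a player's strategy differs
on two equivalent subgames, her payoffs in those subgames coincide. -/
def Credible [DecidableEq ι] (A : ℕ → ι → Type) (u : ι → ∀ t, (∀ i, A t i) → ℝ) (δ : ℝ)
    (σ : Profile A) : Prop :=
  SPE A u δ σ ∧ ∀ k (h h' : PlayPath A) i, ¬ SameRestriction A (σ i) k h h' →
    subPayoff A u δ σ k h i = subPayoff A u δ σ k h' i

end MSG

namespace MSG

/-- Two-stage game payoffs.  Players: `true` = Row, `false` = Column; actions:
`true` = B, `false` = A.  Stage 1 (index `0`): `u(A,·) = (0,0)`,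
`u(B,A) = (1,3)`, `u(B,B) = (4,2)`.  Stage 2 (index `1`): Row always gets `1`;
Column gets `3` if Row plays B and `1` otherwise.  No payoffs afterwards. -/
def twoStageU : Bool → ∀ _ : ℕ, (Bool → Bool) → ℝ :=
  fun i t p =>
    if t = 0 then
      (if i then (if p true then (if p false then 4 else 1) else 0)
       else (if p true then (if p false then 2 else 3) else 0))
    else if t = 1 then (if i then 1 else (if p true then 3 else 1))
    else 0

/-- The profile: Row plays B in stage 1 and, in stage 2, plays B if `(B,B)`
occurred in stage 1 and A otherwise; Column plays B always. -/
def twoStageProfile : Profile (fun (_ : ℕ) (_ : Bool) => Bool) :=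
  fun i =>
    match i with
    | true =>
      { act := fun t h => if t = 0 then true else (h 0 true && h 0 false)
        adapted := by
          intro t p q hpq
          cases t with
          | zero => rfl
          | succ t => have h0 : p 0 = q 0 := hpq 0 (Nat.succ_pos t); simp [h0] }
    | false => ⟨fun _ _ => true, fun _ _ _ _ => rfl⟩

end MSG

namespace MSG

abbrev A2 : ℕ → Bool → Type := fun _ _ => Bool

lemma u_high (i : Bool) (t : ℕ) (ht : 2 ≤ t) (p : Bool → Bool) : twoStageU i t p = 0 := by
  have h0 : t ≠ 0 := by omega
  have h1 : t ≠ 1 := by omega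
  simp [twoStageU, h0, h1]

lemma subPayoff_eq (σ : Profile A2) (k : ℕ) (h : PlayPath A2) (i : Bool) :
    subPayoff A2 twoStageU 1 σ k h i =
      twoStageU i k (outcome A2 σ k h k) +
      twoStageU i (k + 1) (outcome A2 σ k h (k + 1)) := by
  unfold subPayoff
  rw [tsum_eq_sum (s := Finset.range 2) ?_]
  · simp [Finset.sum_range_succ]
  · intro t ht
    have h2 : 2 ≤ t := by
      simp only [Finset.mem_range, not_lt] at ht; omega
    rw [u_high i (k + t) (by omega)]; ring

lemma subPayoff_high (σ : Profile A2) (k : ℕ) (hk : 2 ≤ k) (h : PlayPath A2) (i : Bool) :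
    subPayoff A2 twoStageU 1 σ k h i = 0 := by
  rw [subPayoff_eq, u_high _ _ hk, u_high _ _ (by omega)]; ring

lemma outcome_stage (σ : Profile A2) (k : ℕ) (h : PlayPath A2) (t : ℕ) (htk : k ≤ t) :
    outcome A2 σ k h t = fun i => (σ i).act t (outcomeUpTo A2 σ k h t) := by
  simp [outcome, outcomeUpTo, Nat.not_lt.mpr htk]

lemma upTo1_zero (σ : Profile A2) (k : ℕ) (h : PlayPath A2) :
    outcomeUpTo A2 σ k h 1 =
      Function.update h 0 (if 0 < k then h 0 else fun i => (σ i).act 0 h) := by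
  simp [outcomeUpTo]

lemma out0_zero (σ : Profile A2) (h : PlayPath A2) :
    outcome A2 σ 0 h 0 = fun i => (σ i).act 0 h := by
  rw [outcome_stage σ 0 h 0 le_rfl]
  rfl

lemma out1_zero (σ : Profile A2) (h : PlayPath A2) :
    outcome A2 σ 0 h 1 =
      fun i => (σ i).act 1 (Function.update h 0 (fun j => (σ j).act 0 h)) := by
  rw [outcome_stage σ 0 h 1 (by omega), upTo1_zero]
  simp

lemma row_k1 (σ : Profile A2) (h : PlayPath A2) :
    subPayoff A2 twoStageU 1 σ 1 h true = 1 := by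
  rw [subPayoff_eq]
  simp [twoStageU]

end MSG

open MSG in
/-- With `δ = 1`, the above profile is a credible
equilibrium of the two-stage game; it supports the stage-1 outcome `(B,B)`,
which is not a Nash equilibrium of the stage-1 game. -/
theorem two_stage_credible_supports_non_nash :
    Credible (fun _ _ => Bool) twoStageU 1 twoStageProfile ∧
      (∀ h, outcome (fun _ _ => Bool) twoStageProfile 0 h 0 = fun _ => true) ∧
      ¬ (∀ (i : Bool) (a : Bool),
          twoStageU i 0 (Function.update (fun _ => true) i a) ≤
            twoStageU i 0 (fun _ => true)) := by
  refine ⟨⟨?_, ?_⟩, ?_, ?_⟩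
  · -- SPE
    intro k h i τ
    match k with
    | 0 =>
      cases i with
      | true =>
        set σ' : Profile A2 := Function.update twoStageProfile true τ with hσ'
        have hF : σ' false = twoStageProfile false :=
          Function.update_of_ne (by simp) _ _
        have hT : σ' true = τ := Function.update_self _ _ _
        rw [subPayoff_eq, subPayoff_eq, out0_zero, out1_zero, out0_zero, out1_zero]
        cases hA : τ.act 0 h <;>
          simp [twoStageU, twoStageProfile, hA, hT, hF, Function.update] <;> norm_num
      | false =>
        set σ' : Profile A2 := Function.update twoStageProfile false τ with hσ'
        have hT : σ' true = twoStageProfile true :=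
          Function.update_of_ne (by simp) _ _
        have hF : σ' false = τ := Function.update_self _ _ _
        rw [subPayoff_eq, subPayoff_eq, out0_zero, out1_zero, out0_zero, out1_zero]
        cases hA : τ.act 0 h <;>
          simp [twoStageU, twoStageProfile, hA, hT, hF, Function.update] <;> norm_num
    | 1 =>
      cases i with
      | true =>
        rw [row_k1, row_k1]
      | false =>
        set σ' : Profile A2 := Function.update twoStageProfile false τ with hσ'
        have hT : σ' true = twoStageProfile true :=
          Function.update_of_ne (by simp) _ _
        rw [subPayoff_eq, subPayoff_eq,
          outcome_stage σ' 1 h 1 le_rfl, outcome_stage twoStageProfile 1 h 1 le_rfl,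
          upTo1_zero, upTo1_zero]
        simp [twoStageU, twoStageProfile, hT, Function.update]
    | (n + 2) =>
      rw [subPayoff_high _ _ (by omega), subPayoff_high _ _ (by omega)]
  · -- credibility
    intro k h h' i hne
    cases i with
    | false => exact absurd (fun t ht p => rfl) hne
    | true =>
      match k with
      | 0 =>
        refine absurd (fun t ht p => ?_) hne
        have e1 : splice A2 0 h p = p := funext fun s => if_neg (Nat.not_lt_zero s)
        have e2 : splice A2 0 h' p = p := funext fun s => if_neg (Nat.not_lt_zero s)
        rw [e1, e2]
      | 1 => rw [row_k1, row_k1]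
      | (n + 2) =>
        rw [subPayoff_high _ _ (by omega), subPayoff_high _ _ (by omega)]
  · intro h
    rw [out0_zero]
    funext j
    cases j <;> rfl
  · intro hcon
    have := hcon false false
    simp [twoStageU, Function.update] at this
    norm_num at this
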